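/- For the quantum SIR recurrence with b < c, the susceptible sequence xₙ is strictly decreasing and bounded below by 0, hence converges to a limit α ∈ [0, N], and consequently zₙ converges to N − α − lim yₙ; moreover yₙ → 0, so zₙ → N − α. -/
import Mathlib


open Finset Filter Topology

set_option maxHeartbeats 1600000

theorem quantum_sir_R0_lt_one_full
(b c q t₀ : ℝ) (x y z : ℕ → ℝ)
    (hb : 0 < b) (hc : 0 < c) (hq : 1 < q) (ht : 0 < t₀)
    (hx0 : 0 < x 0) (hy0 : 0 < y 0) (hz0 : 0 ≤ z 0)
    (hrecx : ∀ n : ℕ, x (n + 1) =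
      x n * (x n + y n) / (x n + y n * (1 + b * (q - 1) * (q ^ n * t₀))))
    (hrecy : ∀ n : ℕ, y (n + 1) =
      y n * (1 + b * (q - 1) * (q ^ n * t₀)) * (x n + y n) /
        ((1 + c * (q - 1) * (q ^ n * t₀)) *
          (x n + y n * (1 + b * (q - 1) * (q ^ n * t₀)))))
    (hrecz : ∀ n : ℕ, z (n + 1) =
      c * (q - 1) * (q ^ n * t₀) *
        (y n * (1 + b * (q - 1) * (q ^ n * t₀)) * (x n + y n)) /
        ((1 + c * (q - 1) * (q ^ n * t₀)) *
          (x n + y n * (1 + b * (q - 1) * (q ^ n * t₀)))) + z n)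
    (hbc : b < c) :
    (∀ n : ℕ, x (n + 1) < x n) ∧ (∀ n : ℕ, 0 < x n) ∧
    ∃ α : ℝ, 0 ≤ α ∧ α ≤ x 0 + y 0 + z 0 ∧
      Filter.Tendsto x Filter.atTop (nhds α) ∧
      Filter.Tendsto y Filter.atTop (nhds 0) ∧
      Filter.Tendsto z Filter.atTop (nhds (x 0 + y 0 + z 0 - α)) := by
  have hq1 : (0:ℝ) < q - 1 := sub_pos.mpr hq
  have hq0 : (0:ℝ) < q := lt_trans one_pos hq
  have hs : ∀ n : ℕ, 0 < (q - 1) * (q ^ n * t₀) := fun n =>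
    mul_pos hq1 (mul_pos (pow_pos hq0 n) ht)
  -- positivity of x and y
  have hpos : ∀ n, 0 < x n ∧ 0 < y n := by
    intro n
    induction n with
    | zero => exact ⟨hx0, hy0⟩
    | succ n ih =>
      obtain ⟨hxn, hyn⟩ := ih
      have hsn := hs n
      have hB : 0 < 1 + b * (q - 1) * (q ^ n * t₀) := by nlinarith
      have hC : 0 < 1 + c * (q - 1) * (q ^ n * t₀) := by nlinarith
      have hD : 0 < x n + y n * (1 + b * (q - 1) * (q ^ n * t₀)) := by positivity
      constructor
      · rw [hrecx n]; positivity
      · rw [hrecy n]; positivity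
  have hxpos : ∀ n, 0 < x n := fun n => (hpos n).1
  have hypos : ∀ n, 0 < y n := fun n => (hpos n).2
  -- strict decrease of x
  have hdec : ∀ n : ℕ, x (n + 1) < x n := by
    intro n
    have hsn := hs n
    have hxn := hxpos n; have hyn := hypos n
    have hbs : 0 < b * (q - 1) * (q ^ n * t₀) := by rw [mul_assoc]; exact mul_pos hb hsn
    have hD : 0 < x n + y n * (1 + b * (q - 1) * (q ^ n * t₀)) := by nlinarith [mul_pos hyn hbs]
    rw [hrecx n, div_lt_iff₀ hD]
    nlinarith [mul_pos (mul_pos hb hsn) (mul_pos hxn hyn)]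
  -- conservation: x n + y n + z n = N
  have hsum : ∀ n : ℕ, x n + y n + z n = x 0 + y 0 + z 0 := by
    intro n
    induction n with
    | zero => rfl
    | succ n ih =>
      have hsn := hs n
      have hxn := hxpos n; have hyn := hypos n
      have hbs : 0 < b * (q - 1) * (q ^ n * t₀) := by rw [mul_assoc]; exact mul_pos hb hsn
      have hcs : 0 < c * (q - 1) * (q ^ n * t₀) := by rw [mul_assoc]; exact mul_pos hc hsn
      have hC : 0 < 1 + c * (q - 1) * (q ^ n * t₀) := by linarith
      have hD : 0 < x n + y n * (1 + b * (q - 1) * (q ^ n * t₀)) := by nlinarith [mul_pos hyn hbs]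
      rw [hrecx n, hrecy n, hrecz n, ← ih]
      field_simp
      ring
  -- convergence of x
  have hanti : Antitone x := antitone_nat_of_succ_le fun n => (hdec n).le
  have hbdd : BddBelow (Set.range x) := ⟨0, by rintro _ ⟨n, rfl⟩; exact (hxpos n).le⟩
  have htx : Tendsto x atTop (nhds (⨅ n, x n)) := tendsto_atTop_ciInf hanti hbdd
  set α := ⨅ n, x n with hα
  have hα0 : 0 ≤ α := le_ciInf fun n => (hxpos n).le
  have hαx0 : α ≤ x 0 := ciInf_le hbdd 0
  -- y tends to 0
  set r : ℝ := (b + c) / (2 * c) with hr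
  have hr0 : 0 ≤ r := by positivity
  have hr1 : r < 1 := by rw [hr, div_lt_one (by linarith)]; linarith
  obtain ⟨N₀, hN₀⟩ : ∃ N₀ : ℕ, 1 / (c * ((q - 1) * t₀)) < q ^ N₀ :=
    pow_unbounded_of_one_lt _ hq
  have hkey : ∀ n : ℕ, N₀ ≤ n → y (n + 1) ≤ r * y n := by
    intro n hn
    have hqn : q ^ N₀ ≤ q ^ n := pow_le_pow_right₀ hq.le hn
    have hcs : 1 ≤ c * ((q - 1) * (q ^ n * t₀)) := by
      have h1 : 1 / (c * ((q - 1) * t₀)) < q ^ n := lt_of_lt_of_le hN₀ hqn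
      have h2 : 0 < c * ((q - 1) * t₀) := by positivity
      rw [div_lt_iff₀ h2] at h1
      nlinarith
    have hsn := hs n
    have hxn := hxpos n; have hyn := hypos n
    have hbs : 0 < b * (q - 1) * (q ^ n * t₀) := by rw [mul_assoc]; exact mul_pos hb hsn
    have hB : 0 < 1 + b * (q - 1) * (q ^ n * t₀) := by linarith
    have hC : 0 < 1 + c * (q - 1) * (q ^ n * t₀) := by
      have : 0 < c * (q - 1) * (q ^ n * t₀) := by rw [mul_assoc]; exact mul_pos hc hsn
      linarith
    have hD : 0 < x n + y n * (1 + b * (q - 1) * (q ^ n * t₀)) := by positivity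
    rw [hrecy n, div_le_iff₀ (by positivity)]
    -- 1 + bs ≤ r (1 + cs)
    have hcs' : (1:ℝ) ≤ c * (q - 1) * (q ^ n * t₀) := by rw [mul_assoc]; exact hcs
    have hBC : 1 + b * (q - 1) * (q ^ n * t₀) ≤ r * (1 + c * (q - 1) * (q ^ n * t₀)) := by
      rw [hr, div_mul_eq_mul_div, le_div_iff₀ (by linarith)]
      have hbs' : b * (q - 1) * (q ^ n * t₀) ≤ c * (q - 1) * (q ^ n * t₀) := by
        rw [mul_assoc, mul_assoc]
        exact mul_le_mul_of_nonneg_right hbc.le hsn.le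
      nlinarith [mul_le_mul_of_nonneg_left hcs' (by linarith : (0:ℝ) ≤ c - b)]
    have hAD : x n + y n ≤ x n + y n * (1 + b * (q - 1) * (q ^ n * t₀)) := by
      nlinarith [mul_pos hyn hbs]
    calc y n * (1 + b * (q - 1) * (q ^ n * t₀)) * (x n + y n)
        ≤ y n * (r * (1 + c * (q - 1) * (q ^ n * t₀))) *
            (x n + y n * (1 + b * (q - 1) * (q ^ n * t₀))) := by
          apply mul_le_mul (mul_le_mul le_rfl hBC hB.le hyn.le) hAD (by linarith) (by positivity)
      _ = r * y n * ((1 + c * (q - 1) * (q ^ n * t₀)) *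
            (x n + y n * (1 + b * (q - 1) * (q ^ n * t₀)))) := by ring
  have hgeo : ∀ k : ℕ, y (N₀ + k) ≤ y N₀ * r ^ k := by
    intro k
    induction k with
    | zero => simp
    | succ k ih =>
      have h1 : y (N₀ + k + 1) ≤ r * y (N₀ + k) := hkey _ (Nat.le_add_right _ _)
      calc y (N₀ + (k + 1)) = y (N₀ + k + 1) := by ring_nf
        _ ≤ r * y (N₀ + k) := h1
        _ ≤ r * (y N₀ * r ^ k) := by
            exact mul_le_mul_of_nonneg_left ih hr0
        _ = y N₀ * r ^ (k + 1) := by ring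
  have hty : Tendsto y atTop (nhds 0) := by
    have h0 : Tendsto (fun k : ℕ => y N₀ * r ^ k) atTop (nhds 0) := by
      have := tendsto_pow_atTop_nhds_zero_of_lt_one hr0 hr1
      simpa using this.const_mul (y N₀)
    have hshift : Tendsto (fun k : ℕ => y (k + N₀)) atTop (nhds 0) := by
      apply squeeze_zero (fun k => (hypos _).le) (fun k => ?_) h0
      calc y (k + N₀) = y (N₀ + k) := by rw [Nat.add_comm]
        _ ≤ y N₀ * r ^ k := hgeo k
    exact (tendsto_add_atTop_iff_nat N₀).mp hshift
  -- z tends to N - α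
  have htz : Tendsto z atTop (nhds (x 0 + y 0 + z 0 - α)) := by
    have : Tendsto (fun n => x 0 + y 0 + z 0 - x n - y n) atTop
        (nhds (x 0 + y 0 + z 0 - α - 0)) :=
      (tendsto_const_nhds.sub htx).sub hty
    simp only [sub_zero] at this
    convert this using 2 with n
    have := hsum n
    linarith
  refine ⟨hdec, hxpos, α, hα0, le_trans hαx0 (by nlinarith), htx, hty, htz⟩
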